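/- For α, β ∈ D, the closed test α⁻[β⁺] reduces to the success ε if α = β, and to 0 otherwise. -/

import Mathlib

/-- Terms of the `∂₀λ`-calculus with tests. -/
inductive Tm : Type
  | var : ℕ → Tm
  | lam : ℕ → Tm → Tm
  | app : Tm → List Tm → Tm
  | taubar : List Tm → Tm

mutual
def fv : Tm → Set ℕ
  | .var y => {y}
  | .lam y M => fv M \ {y}
  | .app M P => fv M ∪ fvList P
  | .taubar V => fvList V
def fvList : List Tm → Set ℕ
  | [] => ∅
  | L :: P => fv L ∪ fvList P
end

mutual
def lsub (x : ℕ) (N : Tm) : Tm → Set Tm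
  | .var y => if y = x then {N} else ∅
  | .lam y M => if y = x then ∅ else {A | ∃ M' ∈ lsub x N M, A = Tm.lam y M'}
  | .app M P => {A | ∃ M' ∈ lsub x N M, A = Tm.app M' P} ∪
      {A | ∃ P' ∈ lsubList x N P, A = Tm.app M P'}
  | .taubar V => {A | ∃ V' ∈ lsubList x N V, A = Tm.taubar V'}
def lsubList (x : ℕ) (N : Tm) : List Tm → Set (List Tm)
  | [] => ∅
  | L :: P => {Q | ∃ L' ∈ lsub x N L, Q = L' :: P} ∪
      {Q | ∃ P' ∈ lsubList x N P, Q = L :: P'}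
end

def lsubIter (x : ℕ) : Set Tm → List Tm → Set Tm
  | X, [] => X
  | X, L :: Ls => lsubIter x (⋃ A ∈ X, lsub x L A) Ls

def zeroSub (x : ℕ) (X : Set Tm) : Set Tm := {A ∈ X | x ∉ fv A}

def zeroSub₁ (x : ℕ) (M : Tm) : Set Tm := {A | A = M ∧ x ∉ fv M}

mutual
/-- One-step reduction on terms: rules (β) and (τ̄), closed under contexts. -/
inductive StepT : Tm → Set Tm → Prop
  | beta (x : ℕ) (M : Tm) (P : List Tm) :
      StepT (.app (.lam x M) P) (zeroSub x (lsubIter x {M} P))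
  | taubarNil (V : List Tm) : StepT (.app (.taubar V) []) {.taubar V}
  | taubarCons (V : List Tm) {P : List Tm} (h : P ≠ []) : StepT (.app (.taubar V) P) ∅
  | lam (x : ℕ) {M : Tm} {𝕄 : Set Tm} : StepT M 𝕄 →
      StepT (.lam x M) {A | ∃ M' ∈ 𝕄, A = Tm.lam x M'}
  | appL {M : Tm} {𝕄 : Set Tm} (P : List Tm) : StepT M 𝕄 →
      StepT (.app M P) {A | ∃ M' ∈ 𝕄, A = Tm.app M' P}
  | appR (M : Tm) {P : List Tm} {ℙ : Set (List Tm)} : StepL P ℙ →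
      StepT (.app M P) {A | ∃ P' ∈ ℙ, A = Tm.app M P'}
  | taubarC {V : List Tm} {𝕍 : Set (List Tm)} : StepV V 𝕍 →
      StepT (.taubar V) {A | ∃ V' ∈ 𝕍, A = Tm.taubar V'}
inductive StepL : List Tm → Set (List Tm) → Prop
  | head {L : Tm} {𝕃 : Set Tm} (P : List Tm) : StepT L 𝕃 →
      StepL (L :: P) {Q | ∃ L' ∈ 𝕃, Q = L' :: P}
  | tail (L : Tm) {P : List Tm} {ℙ : Set (List Tm)} : StepL P ℙ →
      StepL (L :: P) {Q | ∃ P' ∈ ℙ, Q = L :: P'}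
/-- One-step reduction on tests: rules (τ) and (γ), and reduction in an element. -/
inductive StepV : List Tm → Set (List Tm) → Prop
  | tau (x : ℕ) (M : Tm) (V : List Tm) :
      StepV (Tm.lam x M :: V) {Q | ∃ M' ∈ zeroSub₁ x M, Q = M' :: V}
  | gamma (W V : List Tm) : StepV (Tm.taubar W :: V) {W ++ V}
  | elem {M : Tm} {𝕄 : Set Tm} (V : List Tm) : StepT M 𝕄 →
      StepV (M :: V) {Q | ∃ M' ∈ 𝕄, Q = M' :: V}
  | tail (M : Tm) {V : List Tm} {𝕍 : Set (List Tm)} : StepV V 𝕍 →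
      StepV (M :: V) {Q | ∃ V' ∈ 𝕍, Q = M :: V'}
end

/-- One-step reduction on sums (sets) of tests. -/
def SStepV (X Y : Set (List Tm)) : Prop :=
  ∃ (V : List Tm) (𝕍 𝕏 : Set (List Tm)), X = insert V 𝕏 ∧ StepV V 𝕍 ∧ Y = 𝕍 ∪ 𝕏

variable {D : Type*}

/-- The `i`-th multiset component of an element of `D ≅ Multiset D × D`. -/
def seqD (e : D ≃ Multiset D × D) : ℕ → D → Multiset D
  | 0, α => (e α).1
  | i + 1, α => seqD e i (e α).2

/-- The element `a₁ :: ⋯ :: a_r :: *` of `D`. -/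
def buildD (e : D ≃ Multiset D × D) (star : D) (as : List (Multiset D)) : D :=
  as.foldr (fun a β => e.symm (a, β)) star

def parallel (ts : List (List Tm)) : List Tm := ts.foldr (· ++ ·) []

def lamMany (r : ℕ) (body : Tm) : Tm := (List.range r).foldr Tm.lam body

/-- The prescription for `α⁺` for `α = a₁ :: ⋯ :: a_r :: *`. -/
noncomputable def plusSpec (mt : D → Tm → List Tm) (as : List (Multiset D)) : Tm :=
  lamMany as.length (Tm.taubar (parallel ((List.range as.length).map
    (fun i => parallel ((as.getD i 0).toList.map (fun β => mt β (Tm.var i)))))))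

/-- The prescription for the test `α⁻[M]` for `α = a₁ :: ⋯ :: a_r :: *`. -/
noncomputable def minusSpec (p : D → Tm) (as : List (Multiset D)) (M : Tm) : List Tm :=
  [(as.map (fun a => (a.map p).toList)).foldl Tm.app M]

open Relation

/-! ### Infrastructure for sum reduction -/

def goodR (X : Set (List Tm)) : Prop := ReflTransGen SStepV X {([] : List Tm)}
def badR (X : Set (List Tm)) : Prop := ReflTransGen SStepV X ∅

lemma sstepV_single {V 𝕍} (h : StepV V 𝕍) : SStepV {V} 𝕍 := ⟨V, 𝕍, ∅, by simp, h, by simp⟩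

lemma sstepV_union_left {X X' Y : Set (List Tm)} (h : SStepV X X') : SStepV (X ∪ Y) (X' ∪ Y) := by
  obtain ⟨V, 𝕍, 𝕏, rfl, hs, rfl⟩ := h
  exact ⟨V, 𝕍, 𝕏 ∪ Y, by rw [Set.insert_union], hs, by rw [Set.union_assoc]⟩

lemma rv_union_left {X X' Y} (h : ReflTransGen SStepV X X') :
    ReflTransGen SStepV (X ∪ Y) (X' ∪ Y) := by
  induction h with
  | refl => exact .refl
  | tail _ h ih => exact ih.tail (sstepV_union_left h)

lemma rv_union {X X' Y Y'} (hX : ReflTransGen SStepV X X') (hY : ReflTransGen SStepV Y Y') :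
    ReflTransGen SStepV (X ∪ Y) (X' ∪ Y') := by
  refine (rv_union_left hX).trans ?_
  rw [Set.union_comm X', Set.union_comm X']
  exact rv_union_left hY

lemma sstepV_image {g : List Tm → List Tm}
    (hg : ∀ V 𝕍, StepV V 𝕍 → StepV (g V) (g '' 𝕍)) {X Y} (h : SStepV X Y) :
    SStepV (g '' X) (g '' Y) := by
  obtain ⟨V, 𝕍, 𝕏, rfl, hs, rfl⟩ := h
  exact ⟨g V, g '' 𝕍, g '' 𝕏, by rw [Set.image_insert_eq], hg _ _ hs,
    by rw [Set.image_union]⟩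

lemma rv_image {g} (hg : ∀ V 𝕍, StepV V 𝕍 → StepV (g V) (g '' 𝕍)) {X Y}
    (h : ReflTransGen SStepV X Y) : ReflTransGen SStepV (g '' X) (g '' Y) := by
  induction h with
  | refl => exact .refl
  | tail _ h ih => exact ih.tail (sstepV_image hg h)

lemma stepV_append_right (W : List Tm) : ∀ {V : List Tm} {𝕍}, StepV V 𝕍 →
    StepV (V ++ W) ((· ++ W) '' 𝕍) := by
  intro V
  induction V with
  | nil => intro 𝕍 h; cases h
  | cons M V ih =>
    intro 𝕍 h
    cases h with
    | tau x M₀ =>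
      convert StepV.tau x M₀ (V ++ W) using 1
      case e'_1 => rfl
      ext Q; simp only [Set.mem_image, Set.mem_setOf_eq]
      constructor
      · rintro ⟨_, ⟨M', hM', rfl⟩, rfl⟩; exact ⟨M', hM', rfl⟩
      · rintro ⟨M', hM', rfl⟩; exact ⟨M' :: V, ⟨M', hM', rfl⟩, rfl⟩
    | gamma W₀ =>
      convert StepV.gamma W₀ (V ++ W) using 1
      case e'_1 => rfl
      simp [List.append_assoc]
    | @elem _ 𝕄 _ hT =>
      convert StepV.elem (V ++ W) hT using 1
      case e'_1 => rfl
      ext Q; simp only [Set.mem_image, Set.mem_setOf_eq]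
      constructor
      · rintro ⟨_, ⟨M', hM', rfl⟩, rfl⟩; exact ⟨M', hM', rfl⟩
      · rintro ⟨M', hM', rfl⟩; exact ⟨M' :: V, ⟨M', hM', rfl⟩, rfl⟩
    | @tail _ _ 𝕍₀ h₀ =>
      convert StepV.tail M (ih h₀) using 1
      case e'_1 => rfl
      ext Q; simp only [Set.mem_image, Set.mem_setOf_eq]
      constructor
      · rintro ⟨_, ⟨V', hV', rfl⟩, rfl⟩; exact ⟨V' ++ W, ⟨V', hV', rfl⟩, rfl⟩
      · rintro ⟨_, ⟨V', hV', rfl⟩, rfl⟩; exact ⟨M :: V', ⟨V', hV', rfl⟩, rfl⟩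

lemma rv_append_right (W : List Tm) {X Y} (h : ReflTransGen SStepV X Y) :
    ReflTransGen SStepV ((· ++ W) '' X) ((· ++ W) '' Y) :=
  rv_image (fun _ _ => stepV_append_right W) h

/-- From `{U} →* {[]}`, reduce a prefix away: `{U ++ W} →* {W}`. -/
lemma rv_prefix_good {U : List Tm} (W : List Tm) (h : goodR {U}) :
    ReflTransGen SStepV {U ++ W} {W} := by
  have := rv_append_right W h
  simpa using this

lemma rv_prefix_bad {U : List Tm} (W : List Tm) (h : badR {U}) :
    badR {U ++ W} := by
  have := rv_append_right W h
  simpa [badR] using this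

lemma goodR_append {U W : List Tm} (hU : goodR {U}) (hW : goodR {W}) : goodR {U ++ W} :=
  (rv_prefix_good W hU).trans hW

lemma badR_append_of_left {U : List Tm} (W : List Tm) (hU : badR {U}) : badR {U ++ W} :=
  rv_prefix_bad W hU

lemma badR_append_of_right {U W : List Tm} (hU : goodR {U}) (hW : badR {W}) : badR {U ++ W} :=
  (rv_prefix_good W hU).trans hW

/-- Reducing a finite (list-indexed) sum where every summand dies. -/
lemma rv_list_bad {ι : Type*} (L : List ι) (f : ι → List Tm)
    (h : ∀ i ∈ L, badR {f i}) : badR {A | ∃ i ∈ L, A = f i} := by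
  induction L with
  | nil =>
    have : {A | ∃ i ∈ ([] : List ι), A = f i} = (∅ : Set (List Tm)) := by ext A; simp
    rw [badR, this]
  | cons i L ih =>
    have : {A | ∃ j ∈ i :: L, A = f j} = {f i} ∪ {A | ∃ j ∈ L, A = f j} := by
      ext A; simp; try tauto
    rw [this]
    have h2 := rv_union (h i (by simp)) (ih (fun j hj => h j (List.mem_cons_of_mem _ hj)))
    simpa [badR] using h2

lemma rv_list_good {ι : Type*} (L : List ι) (f : ι → List Tm)
    (h : ∀ i ∈ L, goodR {f i} ∨ badR {f i}) (hex : ∃ i ∈ L, goodR {f i}) :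
    goodR {A | ∃ i ∈ L, A = f i} := by
  induction L with
  | nil => simp at hex
  | cons i L ih =>
    have hset : {A | ∃ j ∈ i :: L, A = f j} = {f i} ∪ {A | ∃ j ∈ L, A = f j} := by
      ext A; simp; try tauto
    rw [goodR, hset]
    by_cases hL : ∃ j ∈ L, goodR {f j}
    · have h2 := ih (fun j hj => h j (List.mem_cons_of_mem _ hj)) hL
      rcases h i (by simp) with hi | hi
      · have := rv_union hi h2
        simpa using this
      · have := rv_union hi h2
        simpa using this
    · obtain ⟨j, hj, hgood⟩ := hex
      rcases List.mem_cons.mp hj with rfl | hj'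
      · have h2 := rv_list_bad L f (fun k hk => (h k (List.mem_cons_of_mem _ hk)).resolve_left
          (fun hg => hL ⟨k, hk, hg⟩))
        have := rv_union hgood h2
        simpa using this
      · exact absurd ⟨j, hj', hgood⟩ hL
/-! ### Syntactic helpers -/

/-- Iterated application of argument lists. -/
def hterm (N : Tm) (gs : List (List Tm)) : Tm := gs.foldl Tm.app N

/-- Iterated abstraction. -/
def lams (ys : List ℕ) (body : Tm) : Tm := ys.foldr Tm.lam body

@[simp] lemma hterm_nil (N : Tm) : hterm N [] = N := rfl
@[simp] lemma hterm_cons (N : Tm) (g gs) : hterm N (g :: gs) = hterm (Tm.app N g) gs := rfl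
@[simp] lemma lams_nil (M : Tm) : lams [] M = M := rfl
@[simp] lemma lams_cons (y ys) (M : Tm) : lams (y :: ys) M = Tm.lam y (lams ys M) := rfl

@[simp] lemma fv_var (y : ℕ) : fv (Tm.var y) = {y} := by simp [fv]
@[simp] lemma fv_lam (y M) : fv (Tm.lam y M) = fv M \ {y} := by simp [fv]
@[simp] lemma fv_app (M P) : fv (Tm.app M P) = fv M ∪ fvList P := by simp [fv]
@[simp] lemma fv_taubar (V) : fv (Tm.taubar V) = fvList V := by simp [fv]
@[simp] lemma fvList_nil : fvList [] = ∅ := by simp [fvList]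
@[simp] lemma fvList_cons (L P) : fvList (L :: P) = fv L ∪ fvList P := by simp [fvList]

lemma fvList_append (A B : List Tm) : fvList (A ++ B) = fvList A ∪ fvList B := by
  induction A with
  | nil => simp
  | cons L A ih => simp [ih, Set.union_assoc]

lemma fv_hterm_closed {gs : List (List Tm)} (hgs : ∀ g ∈ gs, fvList g = ∅) (N : Tm) :
    fv (hterm N gs) = fv N := by
  induction gs generalizing N with
  | nil => rfl
  | cons g gs ih =>
    rw [hterm_cons, ih (fun g' hg' => hgs g' (List.mem_cons_of_mem _ hg'))]
    simp [hgs g (List.mem_cons_self)]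

lemma fv_lams (ys : List ℕ) (M : Tm) : fv (lams ys M) = fv M \ {y | y ∈ ys} := by
  induction ys with
  | nil => simp
  | cons y ys ih =>
    simp only [lams_cons, fv_lam, ih]
    ext z; simp [List.mem_cons]; tauto

/-! ### Computation of linear substitution -/

@[simp] lemma lsub_var (x N y) : lsub x N (Tm.var y) = if y = x then {N} else ∅ := by
  simp [lsub]

lemma lsub_lam (x N y M) (h : y ≠ x) :
    lsub x N (Tm.lam y M) = {A | ∃ M' ∈ lsub x N M, A = Tm.lam y M'} := by
  simp [lsub, h]

lemma lsub_app (x N M P) : lsub x N (Tm.app M P) =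
    {A | ∃ M' ∈ lsub x N M, A = Tm.app M' P} ∪
    {A | ∃ P' ∈ lsubList x N P, A = Tm.app M P'} := by
  rw [lsub]

lemma lsub_taubar (x N V) :
    lsub x N (Tm.taubar V) = {A | ∃ V' ∈ lsubList x N V, A = Tm.taubar V'} := by
  rw [lsub]

@[simp] lemma lsubList_nil (x N) : lsubList x N [] = ∅ := by rw [lsubList]

lemma lsubList_cons (x N L P) : lsubList x N (L :: P) =
    {Q | ∃ L' ∈ lsub x N L, Q = L' :: P} ∪ {Q | ∃ P' ∈ lsubList x N P, Q = L :: P'} := by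
  rw [lsubList]

lemma lsub_closed (x : ℕ) (N : Tm) :
    (∀ M : Tm, x ∉ fv M → lsub x N M = ∅) ∧
    (∀ P : List Tm, x ∉ fvList P → lsubList x N P = ∅) := by
  suffices H : ∀ n : ℕ, (∀ M : Tm, sizeOf M ≤ n → x ∉ fv M → lsub x N M = ∅) ∧
      (∀ P : List Tm, sizeOf P ≤ n → x ∉ fvList P → lsubList x N P = ∅) by
    exact ⟨fun M => (H (sizeOf M)).1 M le_rfl, fun P => (H (sizeOf P)).2 P le_rfl⟩
  intro n
  induction n using Nat.strong_induction_on with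
  | _ n ih =>
  constructor
  · intro M hs hfv
    cases M with
    | var y =>
      have : y ≠ x := by simpa [eq_comm] using hfv
      simp [this]
    | lam y M =>
      by_cases hy : y = x
      · simp [lsub, hy]
      · have hlt : sizeOf M < n := by
          have : sizeOf M < sizeOf (Tm.lam y M) := by simp <;> omega
          omega
        have hM : lsub x N M = ∅ := (ih _ hlt).1 M le_rfl (by simp at hfv; tauto)
        simp [lsub_lam x N y M hy, hM]
    | app M P =>
      simp only [fv_app, Set.mem_union] at hfv
      push_neg at hfv
      have h1 : sizeOf M < n := by have : sizeOf M < sizeOf (Tm.app M P) := by simp <;> omega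
                                   omega
      have h2 : sizeOf P < n := by have : sizeOf P < sizeOf (Tm.app M P) := by simp <;> omega
                                   omega
      have hM := (ih _ h1).1 M le_rfl hfv.1
      have hP := (ih _ h2).2 P le_rfl hfv.2
      rw [lsub_app, hM, hP]
      simp
    | taubar V =>
      have h2 : sizeOf V < n := by have : sizeOf V < sizeOf (Tm.taubar V) := by simp <;> omega
                                   omega
      have hV := (ih _ h2).2 V le_rfl (by simpa using hfv)
      rw [lsub_taubar, hV]
      simp
  · intro P hs hfv
    cases P with
    | nil => simp
    | cons L P =>
      simp only [fvList_cons, Set.mem_union] at hfv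
      push_neg at hfv
      have h1 : sizeOf L < n := by have : sizeOf L < sizeOf (L :: P) := by simp <;> omega
                                   omega
      have h2 : sizeOf P < n := by have : sizeOf P < sizeOf (L :: P) := by simp <;> omega
                                   omega
      have hL := (ih _ h1).1 L le_rfl hfv.1
      have hP := (ih _ h2).2 P le_rfl hfv.2
      rw [lsubList_cons, hL, hP]
      simp

lemma lsub_of_closed {x : ℕ} {N M : Tm} (h : x ∉ fv M) : lsub x N M = ∅ :=
  (lsub_closed x N).1 M h

lemma lsubList_of_closed {x : ℕ} {N : Tm} {P : List Tm} (h : x ∉ fvList P) :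
    lsubList x N P = ∅ := (lsub_closed x N).2 P h

lemma lsubList_append (x N) (A B : List Tm) : lsubList x N (A ++ B) =
    ((· ++ B) '' lsubList x N A) ∪ ((A ++ ·) '' lsubList x N B) := by
  induction A with
  | nil => simp
  | cons L A ih =>
    rw [List.cons_append, lsubList_cons, ih, lsubList_cons]
    ext Q
    simp only [Set.mem_union, Set.mem_setOf_eq, Set.mem_image]
    constructor
    · rintro (⟨L', hL', rfl⟩ | ⟨Q', (⟨A', hA', rfl⟩ | ⟨B', hB', rfl⟩), rfl⟩)
      · exact Or.inl ⟨L' :: A, Or.inl ⟨L', hL', rfl⟩, rfl⟩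
      · exact Or.inl ⟨L :: A', Or.inr ⟨A', hA', rfl⟩, rfl⟩
      · exact Or.inr ⟨B', hB', rfl⟩
    · rintro (⟨A', (⟨L', hL', rfl⟩ | ⟨A'', hA'', rfl⟩), rfl⟩ | ⟨B', hB', rfl⟩)
      · exact Or.inl ⟨L', hL', rfl⟩
      · exact Or.inr ⟨A'' ++ B, Or.inl ⟨A'', hA'', rfl⟩, rfl⟩
      · exact Or.inr ⟨A ++ B', Or.inr ⟨B', hB', rfl⟩, by simp⟩

lemma lsub_hterm (x N) {gs : List (List Tm)} (hgs : ∀ g ∈ gs, x ∉ fvList g) (h : Tm) :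
    lsub x N (hterm h gs) = (fun h' => hterm h' gs) '' lsub x N h := by
  induction gs generalizing h with
  | nil => simp
  | cons g gs ih =>
    rw [hterm_cons, ih (fun g' hg' => hgs g' (List.mem_cons_of_mem _ hg'))]
    rw [lsub_app, lsubList_of_closed (hgs g (List.mem_cons_self))]
    ext A
    simp only [Set.mem_image, Set.mem_union, Set.mem_setOf_eq]
    constructor
    · rintro ⟨B, (⟨M', hM', rfl⟩ | ⟨P', hP', rfl⟩), rfl⟩
      · exact ⟨M', hM', rfl⟩
      · simp at hP'
    · rintro ⟨M', hM', rfl⟩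
      exact ⟨Tm.app M' g, Or.inl ⟨M', hM', rfl⟩, rfl⟩

lemma lsub_lams (x N) {ys : List ℕ} (hys : x ∉ ys) (M : Tm) :
    lsub x N (lams ys M) = (lams ys) '' lsub x N M := by
  induction ys with
  | nil => ext A; simp
  | cons y ys ih =>
    have hyx : y ≠ x := fun h => hys (h ▸ List.mem_cons_self)
    rw [lams_cons, lsub_lam x N y _ hyx, ih (fun h => hys (List.mem_cons_of_mem _ h))]
    ext A
    simp only [Set.mem_image, Set.mem_setOf_eq]
    constructor
    · rintro ⟨B, ⟨M', hM', rfl⟩, rfl⟩; exact ⟨M', hM', rfl⟩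
    · rintro ⟨M', hM', rfl⟩; exact ⟨lams ys M', ⟨M', hM', rfl⟩, rfl⟩
/-! ### Combinatorics of iterated linear substitution -/

noncomputable instance : DecidableEq Tm := fun _ _ => Classical.propDecidable _

def oneSub (x : ℕ) (N : Tm) : List Tm → Set (List Tm)
  | [] => ∅
  | M :: q => (if M = Tm.var x then {N :: q} else ∅) ∪
      {r | ∃ q' ∈ oneSub x N q, r = M :: q'}

def manySub (x : ℕ) : Set (List Tm) → List Tm → Set (List Tm)
  | Q, [] => Q
  | Q, N :: Ns => manySub x (⋃ q ∈ Q, oneSub x N q) Ns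

/-- `Fill x q vals q'`: `q'` is `q` with the `var x` entries replaced, in order, by `vals`. -/
inductive Fill (x : ℕ) : List Tm → List Tm → List Tm → Prop
  | nil : Fill x [] [] []
  | subst {q vals q' N} : Fill x q vals q' → Fill x (Tm.var x :: q) (N :: vals) (N :: q')
  | keep {q vals q' M} : M ≠ Tm.var x → Fill x q vals q' → Fill x (M :: q) vals (M :: q')

def okQ (x : ℕ) (q : List Tm) : Prop := ∀ M ∈ q, M = Tm.var x ∨ x ∉ fv M

lemma fill_nil_vals {x q q'} (h : Fill x q [] q') : q' = q := by
  generalize hv : ([] : List Tm) = vals at h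
  induction h with
  | nil => rfl
  | subst _ _ => exact absurd hv (by simp)
  | keep _ _ ih => rw [ih hv]

lemma fill_nil_vals_noX {x q q'} (h : Fill x q [] q') : Tm.var x ∉ q' := by
  generalize hv : ([] : List Tm) = vals at h
  induction h with
  | nil => simp
  | subst _ _ => exact absurd hv (by simp)
  | keep hM _ ih => simp [ih hv, Ne.symm hM]

lemma fill_of_noX {x q} (h : Tm.var x ∉ q) : Fill x q [] q := by
  induction q with
  | nil => exact Fill.nil
  | cons M q ih =>
    exact Fill.keep (fun hM => h (hM ▸ List.mem_cons_self))
      (ih fun hm => h (List.mem_cons_of_mem _ hm))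

lemma fill_noX {x q vals q'} (h : Fill x q vals q') (hvals : ∀ N ∈ vals, N ≠ Tm.var x) :
    Tm.var x ∉ q' := by
  induction h with
  | nil => simp
  | @subst q vals q' N h ih =>
    simp only [List.mem_cons, not_or]
    exact ⟨Ne.symm (hvals N (by simp)), ih fun N' hN' => hvals N' (by simp [hN'])⟩
  | keep hM _ ih =>
    simp only [List.mem_cons, not_or]
    exact ⟨Ne.symm hM, ih hvals⟩

lemma fill_insert {x N q₀ q₁ vals q'} (hN : N ≠ Tm.var x)
    (h₁ : q₁ ∈ oneSub x N q₀) (h : Fill x q₁ vals q') :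
    ∃ vals', vals'.Perm (N :: vals) ∧ Fill x q₀ vals' q' := by
  induction q₀ generalizing q₁ vals q' with
  | nil => simp [oneSub] at h₁
  | cons M t ih =>
    simp only [oneSub, Set.mem_union, Set.mem_setOf_eq] at h₁
    rcases h₁ with h₁ | ⟨t₁, ht₁, rfl⟩
    · -- substitution happened at the head: M = var x, q₁ = N :: t
      by_cases hM : M = Tm.var x
      · rw [if_pos hM] at h₁
        simp only [Set.mem_singleton_iff] at h₁
        subst h₁
        -- h : Fill x (N :: t) vals q'
        cases h with
        | subst h' => exact absurd rfl hN
        | keep _ h' =>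
          exact ⟨N :: vals, List.Perm.refl _, hM ▸ Fill.subst h'⟩
      · rw [if_neg hM] at h₁; simp at h₁
    · -- substitution in the tail
      cases h with
      | subst h' =>
        obtain ⟨vals', hperm, hfill⟩ := ih ht₁ h'
        rename_i vals₂ q₂ V
        exact ⟨V :: vals', ((hperm.cons V).trans (List.Perm.swap N V vals₂)),
          Fill.subst hfill⟩
      | keep hM h' =>
        obtain ⟨vals', hperm, hfill⟩ := ih ht₁ h'
        exact ⟨vals', hperm, Fill.keep hM hfill⟩

lemma fill_extract {x N q₀ u v q'} (hN : N ≠ Tm.var x)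
    (h : Fill x q₀ (u ++ N :: v) q') :
    ∃ q₁ ∈ oneSub x N q₀, Fill x q₁ (u ++ v) q' := by
  generalize hv : u ++ N :: v = vals at h
  induction h generalizing u v with
  | nil => exact absurd hv (by simp)
  | @subst q vals₀ q'' V h ih =>
    cases u with
    | nil =>
      simp only [List.nil_append, List.cons.injEq] at hv
      obtain ⟨rfl, rfl⟩ := hv
      exact ⟨N :: q, by simp [oneSub], Fill.keep hN h⟩
    | cons V' u =>
      simp only [List.cons_append, List.cons.injEq] at hv
      obtain ⟨rfl, rfl⟩ := hv
      obtain ⟨q₁, hq₁, hfill⟩ := ih rfl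
      exact ⟨Tm.var x :: q₁, by simp [oneSub, hq₁], Fill.subst hfill⟩
  | @keep q vals₀ q'' M hM h ih =>
    obtain ⟨q₁, hq₁, hfill⟩ := ih hv
    exact ⟨M :: q₁, by simp [oneSub, hq₁, if_neg hM], Fill.keep hM hfill⟩

lemma manySub_char (x : ℕ) (Ns : List Tm) (hNs : ∀ N ∈ Ns, N ≠ Tm.var x) (Q : Set (List Tm)) :
    {q' | q' ∈ manySub x Q Ns ∧ Tm.var x ∉ q'} =
    {q' | ∃ q₀ ∈ Q, ∃ vals, vals.Perm Ns ∧ Fill x q₀ vals q'} := by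
  induction Ns generalizing Q with
  | nil =>
    ext q'
    simp only [manySub, Set.mem_setOf_eq]
    constructor
    · rintro ⟨hq, hnx⟩
      exact ⟨q', hq, [], List.Perm.refl _, fill_of_noX hnx⟩
    · rintro ⟨q₀, hq₀, vals, hperm, hfill⟩
      have hv : vals = [] := List.Perm.eq_nil hperm
      subst hv
      have := fill_nil_vals hfill
      subst this
      exact ⟨hq₀, fill_nil_vals_noX hfill⟩
  | cons N Ns ih =>
    have hN : N ≠ Tm.var x := hNs N (by simp)
    rw [manySub, ih (fun N' hN' => hNs N' (by simp [hN']))]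
    ext q'
    simp only [Set.mem_setOf_eq, Set.mem_iUnion]
    constructor
    · rintro ⟨q₁, ⟨q₀, hq₀, hone⟩, vals, hperm, hfill⟩
      obtain ⟨vals', hperm', hfill'⟩ := fill_insert hN hone hfill
      exact ⟨q₀, hq₀, vals', hperm'.trans (hperm.cons N), hfill'⟩
    · rintro ⟨q₀, hq₀, vals, hperm, hfill⟩
      have hmem : N ∈ vals := hperm.mem_iff.mpr (by simp)
      obtain ⟨u, v, rfl⟩ := List.append_of_mem hmem
      obtain ⟨q₁, hone, hfill'⟩ := fill_extract hN hfill
      refine ⟨q₁, ⟨q₀, hq₀, hone⟩, u ++ v, ?_, hfill'⟩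
      have h1 : (u ++ N :: v).Perm (N :: (u ++ v)) := List.perm_middle
      exact (List.perm_cons N).mp (h1.symm.trans hperm)

lemma fill_replicate {x n vals q'} (h : Fill x (List.replicate n (Tm.var x)) vals q') :
    vals = q' ∧ n = q'.length := by
  generalize hq : List.replicate n (Tm.var x) = q at h
  induction h generalizing n with
  | nil => cases n with
    | zero => simp
    | succ n => simp at hq
  | @subst q vals₀ q'' V h ih =>
    cases n with
    | zero => simp at hq
    | succ n =>
      rw [List.replicate_succ] at hq
      simp only [List.cons.injEq] at hq
      obtain ⟨ih1, ih2⟩ := ih hq.2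
      simp [ih1, ih2]
  | @keep q vals₀ q'' M hM h ih =>
    cases n with
    | zero => simp at hq
    | succ n =>
      rw [List.replicate_succ] at hq
      simp only [List.cons.injEq] at hq
      exact absurd hq.1.symm hM

lemma fill_replicate_self (x : ℕ) (q : List Tm) :
    Fill x (List.replicate q.length (Tm.var x)) q q := by
  induction q with
  | nil => exact Fill.nil
  | cons M q ih => exact Fill.subst ih

lemma manySub_replicate (x : ℕ) (n : ℕ) (Ns : List Tm) (hNs : ∀ N ∈ Ns, N ≠ Tm.var x) :
    {q' | q' ∈ manySub x {List.replicate n (Tm.var x)} Ns ∧ Tm.var x ∉ q'} =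
    {q' | q'.Perm Ns ∧ q'.length = n} := by
  rw [manySub_char x Ns hNs]
  ext q'
  simp only [Set.mem_setOf_eq, Set.mem_singleton_iff]
  constructor
  · rintro ⟨q₀, rfl, vals, hperm, hfill⟩
    obtain ⟨rfl, hn⟩ := fill_replicate hfill
    exact ⟨hperm, hn.symm⟩
  · rintro ⟨hperm, hlen⟩
    exact ⟨_, rfl, q', hperm, hlen ▸ fill_replicate_self x q'⟩

lemma oneSub_length {x N q q'} (h : q' ∈ oneSub x N q) : q'.length = q.length := by
  induction q generalizing q' with
  | nil => simp [oneSub] at h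
  | cons M t ih =>
    simp only [oneSub, Set.mem_union, Set.mem_setOf_eq] at h
    rcases h with h | ⟨t', ht', rfl⟩
    · by_cases hM : M = Tm.var x
      · rw [if_pos hM] at h; simp at h; simp [h]
      · rw [if_neg hM] at h; simp at h
    · simp [ih ht']

lemma oneSub_ok {x N q q'} (hN : x ∉ fv N) (hq : okQ x q) (h : q' ∈ oneSub x N q) :
    okQ x q' := by
  induction q generalizing q' with
  | nil => simp [oneSub] at h
  | cons M t ih =>
    simp only [oneSub, Set.mem_union, Set.mem_setOf_eq] at h
    rcases h with h | ⟨t', ht', rfl⟩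
    · by_cases hM : M = Tm.var x
      · rw [if_pos hM] at h; simp at h; subst h
        intro M' hM'
        rcases List.mem_cons.mp hM' with rfl | hm
        · exact Or.inr hN
        · exact hq M' (List.mem_cons_of_mem _ hm)
      · rw [if_neg hM] at h; simp at h
    · intro M' hM'
      rcases List.mem_cons.mp hM' with rfl | hm
      · exact hq M' (List.mem_cons_self)
      · exact ih (fun A hA => hq A (List.mem_cons_of_mem _ hA)) ht' M' hm
/-! ### The shape of terms during evaluation, and the result of a β-step -/

def repB (ys : List ℕ) (T rest : List Tm) (gss : List (List (List Tm))) (q : List Tm) : Tm :=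
  lams ys (Tm.taubar (T ++ (List.zipWith hterm q gss ++ rest)))

lemma fv_hterm_eq (gs : List (List Tm)) (h : Tm) :
    fv (hterm h gs) = fv h ∪ {y | ∃ g ∈ gs, y ∈ fvList g} := by
  induction gs generalizing h with
  | nil => simp
  | cons g gs ih =>
    rw [hterm_cons, ih, fv_app]
    ext z; simp; tauto

lemma lsub_row (x : ℕ) (N : Tm) : ∀ (q : List Tm) (gss : List (List (List Tm))),
    q.length = gss.length → (∀ M ∈ q, M = Tm.var x ∨ x ∉ fv M) →
    (∀ gs ∈ gss, ∀ g ∈ gs, x ∉ fvList g) →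
    lsubList x N (List.zipWith hterm q gss) =
      (fun q' => List.zipWith hterm q' gss) '' oneSub x N q := by
  intro q
  induction q with
  | nil =>
    intro gss hlen _ _
    have : gss = [] := by cases gss <;> simp_all
    subst this
    simp [oneSub]
  | cons M q ih =>
    intro gss hlen hok hgss
    cases gss with
    | nil => simp at hlen
    | cons gs gss =>
      have hgs : ∀ g ∈ gs, x ∉ fvList g := hgss gs (by simp)
      have hrec := ih gss (by simpa using hlen) (fun A hA => hok A (by simp [hA]))
        (fun gs' hgs' => hgss gs' (by simp [hgs']))
      rw [List.zipWith_cons_cons, lsubList_cons, hrec, lsub_hterm x N hgs]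
      ext Q
      simp only [Set.mem_union, Set.mem_setOf_eq, Set.mem_image, oneSub]
      constructor
      · rintro (⟨L', ⟨M', hM', rfl⟩, rfl⟩ | ⟨Q', ⟨q', hq', rfl⟩, rfl⟩)
        · -- a substitution happened in the head term
          have hMx : M = Tm.var x := by
            rcases hok M (by simp) with h | h
            · exact h
            · rw [lsub_of_closed h] at hM'; simp at hM'
          subst hMx
          simp only [lsub_var, if_pos rfl, Set.mem_singleton_iff] at hM'
          subst hM'
          exact ⟨M' :: q, by simp [oneSub], rfl⟩
        · exact ⟨M :: q', Or.inr ⟨q', hq', rfl⟩, rfl⟩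
      · rintro ⟨q₁, (h1 | ⟨q', hq', rfl⟩), rfl⟩
        · by_cases hM : M = Tm.var x
          · rw [if_pos hM] at h1
            simp only [Set.mem_singleton_iff] at h1
            subst h1 hM
            exact Or.inl ⟨hterm N gs, ⟨N, by simp, rfl⟩, rfl⟩
          · rw [if_neg hM] at h1; simp at h1
        · exact Or.inr ⟨List.zipWith hterm q' gss, ⟨q', hq', rfl⟩, rfl⟩

lemma lsub_repB (x : ℕ) (N : Tm) {ys T rest gss} (hys : x ∉ ys) (hT : x ∉ fvList T)
    (hrest : x ∉ fvList rest) {q : List Tm} (hlen : q.length = gss.length)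
    (hok : okQ x q) (hgss : ∀ gs ∈ gss, ∀ g ∈ gs, x ∉ fvList g) :
    lsub x N (repB ys T rest gss q) = repB ys T rest gss '' oneSub x N q := by
  rw [repB, lsub_lams x N hys, lsub_taubar, lsubList_append, lsubList_append,
    lsubList_of_closed hT, lsubList_of_closed hrest, lsub_row x N q gss hlen hok hgss]
  ext A
  simp only [Set.mem_image, Set.mem_setOf_eq, Set.mem_union, Set.image_empty,
    Set.empty_union, Set.union_empty, repB]
  constructor
  · rintro ⟨B, ⟨V', (⟨C, ⟨D, ⟨q', hq', rfl⟩, rfl⟩, rfl⟩), rfl⟩, rfl⟩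
    exact ⟨q', hq', rfl⟩
  · rintro ⟨q', hq', rfl⟩
    exact ⟨_, ⟨_, ⟨_, ⟨_, ⟨q', hq', rfl⟩, rfl⟩, rfl⟩, rfl⟩, rfl⟩

lemma manySub_preserve (x : ℕ) {gss : List (List (List Tm))} : ∀ (Ns : List Tm),
    (∀ N ∈ Ns, x ∉ fv N) → ∀ (Q : Set (List Tm)),
    (∀ q ∈ Q, okQ x q ∧ q.length = gss.length) →
    ∀ q' ∈ manySub x Q Ns, okQ x q' ∧ q'.length = gss.length := by
  intro Ns
  induction Ns with
  | nil => intro _ Q hQ q' hq'; exact hQ q' hq'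
  | cons N Ns ih =>
    intro hNs Q hQ q' hq'
    rw [manySub] at hq'
    refine ih (fun A hA => hNs A (by simp [hA])) _ ?_ q' hq'
    rintro q₁ hq₁
    simp only [Set.mem_iUnion] at hq₁
    obtain ⟨q₀, hq₀, hone⟩ := hq₁
    exact ⟨oneSub_ok (hNs N (by simp)) (hQ q₀ hq₀).1 hone,
      (oneSub_length hone).trans (hQ q₀ hq₀).2⟩

lemma lsubIter_repB (x : ℕ) {ys T rest gss} (hys : x ∉ ys) (hT : x ∉ fvList T)
    (hrest : x ∉ fvList rest) (hgss : ∀ gs ∈ gss, ∀ g ∈ gs, x ∉ fvList g) :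
    ∀ (Ns : List Tm), (∀ N ∈ Ns, x ∉ fv N) → ∀ (Q : Set (List Tm)),
    (∀ q ∈ Q, okQ x q ∧ q.length = gss.length) →
    lsubIter x (repB ys T rest gss '' Q) Ns = repB ys T rest gss '' manySub x Q Ns := by
  intro Ns
  induction Ns with
  | nil => intro _ Q _; rw [lsubIter, manySub]
  | cons N Ns ih =>
    intro hNs Q hQ
    rw [lsubIter, manySub]
    have hunion : (⋃ A ∈ repB ys T rest gss '' Q, lsub x N A) =
        repB ys T rest gss '' ⋃ q ∈ Q, oneSub x N q := by
      rw [Set.biUnion_image]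
      rw [Set.image_iUnion₂]
      refine Set.iUnion₂_congr fun q hq => ?_
      exact lsub_repB x N hys hT hrest (hQ q hq).2 (hQ q hq).1 hgss
    rw [hunion]
    refine ih (fun A hA => hNs A (by simp [hA])) _ ?_
    rintro q₁ hq₁
    simp only [Set.mem_iUnion] at hq₁
    obtain ⟨q₀, hq₀, hone⟩ := hq₁
    exact ⟨oneSub_ok (hNs N (by simp)) (hQ q₀ hq₀).1 hone,
      (oneSub_length hone).trans (hQ q₀ hq₀).2⟩

lemma mem_fv_row (x : ℕ) : ∀ (q : List Tm) (gss : List (List (List Tm))),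
    q.length = gss.length → okQ x q → (∀ gs ∈ gss, ∀ g ∈ gs, x ∉ fvList g) →
    (x ∈ fvList (List.zipWith hterm q gss) ↔ Tm.var x ∈ q) := by
  intro q
  induction q with
  | nil => intro gss _ _ _; simp
  | cons M q ih =>
    intro gss hlen hok hgss
    cases gss with
    | nil => simp at hlen
    | cons gs gss =>
      rw [List.zipWith_cons_cons, fvList_cons, fv_hterm_eq]
      have h1 : x ∉ {y | ∃ g ∈ gs, y ∈ fvList g} := by
        simp only [Set.mem_setOf_eq, not_exists]
        rintro g ⟨hg, hx⟩
        exact hgss gs (by simp) g hg hx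
      have h2 := ih gss (by simpa using hlen) (fun A hA => hok A (by simp [hA]))
        (fun gs' hgs' => hgss gs' (by simp [hgs']))
      simp only [Set.mem_union, List.mem_cons]
      constructor
      · rintro ((hx | hx) | hx)
        · rcases hok M (by simp) with rfl | hM
          · exact Or.inl rfl
          · exact absurd hx hM
        · exact absurd hx h1
        · exact Or.inr (h2.mp hx)
      · rintro (rfl | hm)
        · exact Or.inl (Or.inl (by simp))
        · exact Or.inr (h2.mpr hm)

lemma mem_fv_repB (x : ℕ) {ys T rest gss} (hys : x ∉ ys) (hT : x ∉ fvList T)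
    (hrest : x ∉ fvList rest) (hgss : ∀ gs ∈ gss, ∀ g ∈ gs, x ∉ fvList g)
    {q : List Tm} (hlen : q.length = gss.length) (hok : okQ x q) :
    (x ∈ fv (repB ys T rest gss q) ↔ Tm.var x ∈ q) := by
  rw [repB, fv_lams]
  simp only [Set.mem_diff, Set.mem_setOf_eq, fv_taubar, fvList_append]
  rw [← mem_fv_row x q gss hlen hok hgss]
  simp only [Set.mem_union]
  tauto

lemma zeroSub_repB (x : ℕ) {ys T rest gss} (hys : x ∉ ys) (hT : x ∉ fvList T)
    (hrest : x ∉ fvList rest) (hgss : ∀ gs ∈ gss, ∀ g ∈ gs, x ∉ fvList g)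
    {S : Set (List Tm)} (hS : ∀ q ∈ S, okQ x q ∧ q.length = gss.length) :
    zeroSub x (repB ys T rest gss '' S) =
      repB ys T rest gss '' {q ∈ S | Tm.var x ∉ q} := by
  ext A
  simp only [zeroSub, Set.mem_setOf_eq, Set.mem_image, Set.mem_sep_iff]
  constructor
  · rintro ⟨⟨q, hq, rfl⟩, hfv⟩
    refine ⟨q, ⟨hq, ?_⟩, rfl⟩
    intro hmem
    exact hfv ((mem_fv_repB x hys hT hrest hgss (hS q hq).2 (hS q hq).1).mpr hmem)
  · rintro ⟨q, ⟨hq, hnx⟩, rfl⟩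
    refine ⟨⟨q, hq, rfl⟩, fun hfv => hnx ?_⟩
    exact (mem_fv_repB x hys hT hrest hgss (hS q hq).2 (hS q hq).1).mp hfv

/-- The result of one `β`-step on the term shapes appearing in the evaluation. -/
lemma beta_char (x : ℕ) {ys T rest gss} (hys : x ∉ ys) (hT : x ∉ fvList T)
    (hrest : x ∉ fvList rest) (hgss : ∀ gs ∈ gss, ∀ g ∈ gs, x ∉ fvList g)
    (Pa : List Tm) (hPa : ∀ N ∈ Pa, x ∉ fv N) :
    zeroSub x (lsubIter x {repB ys T rest gss (List.replicate gss.length (Tm.var x))} Pa) =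
      repB ys T rest gss '' {q | q.Perm Pa ∧ q.length = gss.length} := by
  have hok0 : ∀ q ∈ ({List.replicate gss.length (Tm.var x)} : Set (List Tm)),
      okQ x q ∧ q.length = gss.length := by
    rintro q rfl
    exact ⟨fun M hM => Or.inl (List.eq_of_mem_replicate hM), by simp⟩
  have h1 : ({repB ys T rest gss (List.replicate gss.length (Tm.var x))} : Set Tm) =
      repB ys T rest gss '' {List.replicate gss.length (Tm.var x)} :=
    (Set.image_singleton).symm
  rw [h1, lsubIter_repB x hys hT hrest hgss Pa hPa _ hok0,
    zeroSub_repB x hys hT hrest hgss (manySub_preserve x Pa hPa _ hok0)]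
  have hNs : ∀ N ∈ Pa, N ≠ Tm.var x := by
    intro N hN hEq
    exact hPa N hN (by simp [hEq])
  have hset : {q ∈ manySub x {List.replicate gss.length (Tm.var x)} Pa | Tm.var x ∉ q} =
      {q | q.Perm Pa ∧ q.length = gss.length} := by
    ext q'
    have := Set.ext_iff.mp (manySub_replicate x gss.length Pa hNs) q'
    simpa using this
  rw [hset]
/-! ### Model-side definitions -/

@[simp] lemma parallel_nil : parallel ([] : List (List Tm)) = [] := rfl
@[simp] lemma parallel_cons (u : List Tm) (ts) : parallel (u :: ts) = u ++ parallel ts := rfl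

lemma fvList_empty_iff (l : List Tm) : fvList l = ∅ ↔ ∀ N ∈ l, fv N = ∅ := by
  induction l with
  | nil => simp
  | cons M l ih =>
    simp only [fvList_cons, Set.union_empty_iff, List.mem_cons, ih]
    constructor
    · rintro ⟨h1, h2⟩ N (rfl | hN); exacts [h1, h2 N hN]
    · intro h; exact ⟨h M (Or.inl rfl), fun N hN => h N (Or.inr hN)⟩

section Model

variable {D : Type*} (e : D ≃ Multiset D × D) (star : D)

lemma seqD_star (hstar : e star = (0, star)) : ∀ i, seqD e i star = 0 := by
  intro i
  induction i with
  | zero => simp [seqD, hstar]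
  | succ i ih => simp [seqD, hstar]; exact ih

lemma seqD_buildD (hstar : e star = (0, star)) :
    ∀ (as : List (Multiset D)) (i : ℕ), seqD e i (buildD e star as) = as.getD i 0 := by
  intro as
  induction as with
  | nil => intro i; simp [buildD, seqD_star e star hstar]
  | cons a as ih =>
    intro i
    cases i with
    | zero => simp [buildD, seqD]
    | succ i =>
      have h1 : seqD e (i+1) (buildD e star (a :: as)) = seqD e i (buildD e star as) := by
        simp [seqD, buildD]
      rw [h1, ih, List.getD_cons_succ]

/-- a normalized list building `star` is empty -/
lemma buildD_eq_star (hstar : e star = (0, star)) :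
    ∀ (as : List (Multiset D)), (∀ h : as ≠ [], as.getLast h ≠ 0) →
      buildD e star as = star → as = [] := by
  intro as
  induction as with
  | nil => intro _ _; rfl
  | cons a as ih =>
    intro hnorm hb
    exfalso
    rw [buildD] at hb
    have h2 : (a, (buildD e star as)) = e star := by
      have := congrArg e hb
      simpa [buildD] using this
    rw [hstar] at h2
    have ha : a = 0 := (Prod.mk.injEq .. ▸ h2).1
    have hrest : buildD e star as = star := (Prod.mk.injEq .. ▸ h2).2
    cases as with
    | nil => exact (hnorm (by simp)) (by simpa using ha)
    | cons b bs =>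
      have : b :: bs = [] := ih (fun h => by
        have := hnorm (by simp)
        rwa [List.getLast_cons h] at this) hrest
      simp at this

lemma buildD_inj (hstar : e star = (0, star)) :
    ∀ (as bs : List (Multiset D)), (∀ h : as ≠ [], as.getLast h ≠ 0) →
      (∀ h : bs ≠ [], bs.getLast h ≠ 0) →
      buildD e star as = buildD e star bs → as = bs := by
  intro as
  induction as with
  | nil =>
    intro bs _ hbs hb
    exact (buildD_eq_star e star hstar bs hbs (by rw [← hb]; rfl)).symm
  | cons a as ih =>
    intro bs hnorm hbs hb
    cases bs with
    | nil =>
      exact absurd (buildD_eq_star e star hstar _ hnorm (by rw [hb]; rfl)) (by simp)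
    | cons b bs =>
      rw [buildD, buildD] at hb
      have h2 : (a, buildD e star as) = (b, buildD e star bs) := by
        have := congrArg e hb
        simpa [buildD] using this
      obtain ⟨h3, h4⟩ := Prod.mk.injEq .. ▸ h2
      have htail : as = bs := by
        rcases List.eq_nil_or_concat as with rfl | _
        · exact (buildD_eq_star e star hstar bs
            (fun h => by have := hbs (by simp); rwa [List.getLast_cons h] at this)
            (by rw [← h4]; rfl)).symm
        · rcases List.eq_nil_or_concat bs with rfl | _
          · exact buildD_eq_star e star hstar as
              (fun h => by have := hnorm (by simp); rwa [List.getLast_cons h] at this)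
              (by rw [h4]; rfl)
          · refine ih bs ?_ ?_ h4
            · intro h; have := hnorm (by simp); rwa [List.getLast_cons h] at this
            · intro h; have := hbs (by simp); rwa [List.getLast_cons h] at this
      rw [h3, htail]

variable (p : D → Tm) (mt : D → Tm → List Tm) (cs : D → List (Multiset D))

/-- argument lists. -/
noncomputable def psL (as : List (Multiset D)) : List (List Tm) := as.map (fun a => (a.map p).toList)

noncomputable def argsD (γ : D) : List (List Tm) := psL p (cs γ)

/-- The body of `α⁺`, with binders starting at `k`. -/
noncomputable def wL : ℕ → List (Multiset D) → List Tm
  | _, [] => []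
  | k, b :: bt => (b.toList.map fun γ => hterm (Tm.var k) (argsD p cs γ)) ++ wL (k+1) bt

@[simp] lemma psL_nil : psL p [] = [] := rfl
@[simp] lemma psL_cons (a as) : psL p (a :: as) = (a.map p).toList :: psL p as := rfl
@[simp] lemma wL_nil (k : ℕ) : wL p cs k [] = [] := rfl
lemma wL_cons (k b bt) : wL p cs k (b :: bt) =
    (b.toList.map fun γ => hterm (Tm.var k) (argsD p cs γ)) ++ wL p cs (k+1) bt := by rw [wL]

/-- The canonical term at stage `k` of the evaluation. -/
noncomputable def Cterm (k : ℕ) (T : List Tm) (as bs : List (Multiset D)) : Tm :=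
  (psL p as).foldl Tm.app (lams (List.range' k bs.length) (Tm.taubar (T ++ wL p cs k bs)))

end Model
section Model2

variable {D : Type*} (e : D ≃ Multiset D × D) (star : D)
variable (p : D → Tm) (mt : D → Tm → List Tm) (cs : D → List (Multiset D))

/-- `cmpR e γ' γ`: `γ'` is a component of `γ`. -/
def cmpR : D → D → Prop := fun β α => ∃ i : ℕ, β ∈ seqD e i α

lemma mt_eq (hcs1 : ∀ γ : D, ∀ h : cs γ ≠ [], (cs γ).getLast h ≠ 0)
    (hcs2 : ∀ γ : D, γ = buildD e star (cs γ))
    (hmt : ∀ as : List (Multiset D), (∀ h : as ≠ [], as.getLast h ≠ 0) →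
      ∀ M : Tm, mt (buildD e star as) M = minusSpec p as M)
    (γ : D) (M : Tm) : mt γ M = [hterm M (argsD p cs γ)] := by
  have h := hmt (cs γ) (hcs1 γ) M
  rw [← hcs2 γ] at h
  rw [h]
  rfl

lemma block_eq (hcs1 : ∀ γ : D, ∀ h : cs γ ≠ [], (cs γ).getLast h ≠ 0)
    (hcs2 : ∀ γ : D, γ = buildD e star (cs γ))
    (hmt : ∀ as : List (Multiset D), (∀ h : as ≠ [], as.getLast h ≠ 0) →
      ∀ M : Tm, mt (buildD e star as) M = minusSpec p as M)
    (l : List D) (N : Tm) :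
    parallel (l.map (fun γ => mt γ N)) = l.map (fun γ => hterm N (argsD p cs γ)) := by
  induction l with
  | nil => simp
  | cons γ l ih =>
    simp only [List.map_cons, parallel_cons, ih,
      mt_eq e star p mt cs hcs1 hcs2 hmt γ N]
    rfl

lemma blocks_eq (hcs1 : ∀ γ : D, ∀ h : cs γ ≠ [], (cs γ).getLast h ≠ 0)
    (hcs2 : ∀ γ : D, γ = buildD e star (cs γ))
    (hmt : ∀ as : List (Multiset D), (∀ h : as ≠ [], as.getLast h ≠ 0) →
      ∀ M : Tm, mt (buildD e star as) M = minusSpec p as M) :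
    ∀ (bs : List (Multiset D)) (k : ℕ),
    parallel ((List.range bs.length).map (fun i =>
      parallel ((bs.getD i 0).toList.map (fun β => mt β (Tm.var (k + i)))))) =
    wL p cs k bs := by
  intro bs
  induction bs with
  | nil => intro k; simp
  | cons b bt ih =>
    intro k
    rw [List.length_cons, List.range_succ_eq_map, List.map_cons, parallel_cons, wL_cons]
    congr 1
    · rw [show (b :: bt).getD 0 0 = b from rfl, Nat.add_zero,
        block_eq e star p mt cs hcs1 hcs2 hmt b.toList (Tm.var k)]
    · rw [← ih (k + 1), List.map_map]
      congr 1
      refine List.map_congr_left fun i _ => ?_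
      have h1 : (b :: bt).getD (i + 1) 0 = bt.getD i 0 := List.getD_cons_succ ..
      have h2 : k + (i + 1) = k + 1 + i := by omega
      simp [Function.comp, h1, h2]

lemma p_eq (hcs1 : ∀ γ : D, ∀ h : cs γ ≠ [], (cs γ).getLast h ≠ 0)
    (hcs2 : ∀ γ : D, γ = buildD e star (cs γ))
    (hp : ∀ as : List (Multiset D), (∀ h : as ≠ [], as.getLast h ≠ 0) →
      p (buildD e star as) = plusSpec mt as)
    (hmt : ∀ as : List (Multiset D), (∀ h : as ≠ [], as.getLast h ≠ 0) →
      ∀ M : Tm, mt (buildD e star as) M = minusSpec p as M)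
    (γ : D) :
    p γ = lams (List.range' 0 (cs γ).length) (Tm.taubar (wL p cs 0 (cs γ))) := by
  have h := hp (cs γ) (hcs1 γ)
  rw [← hcs2 γ] at h
  rw [h, plusSpec]
  have hbody : parallel ((List.range (cs γ).length).map (fun i =>
      parallel (((cs γ).getD i 0).toList.map (fun β => mt β (Tm.var i))))) =
      wL p cs 0 (cs γ) := by
    rw [← blocks_eq e star p mt cs hcs1 hcs2 hmt (cs γ) 0]
    congr 1
    refine List.map_congr_left fun i _ => ?_
    simp
  rw [hbody, lamMany, lams, List.range_eq_range']

lemma mem_stage_rel (hstar : e star = (0, star))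
    (hcs2 : ∀ γ : D, γ = buildD e star (cs γ))
    {γ' γ : D} (h : ∃ b ∈ cs γ, γ' ∈ b) : cmpR e γ' γ := by
  obtain ⟨b, hb, hγ'⟩ := h
  obtain ⟨i, hi, hbi⟩ := List.mem_iff_getElem.mp hb
  show ∃ i : ℕ, γ' ∈ seqD e i γ
  refine ⟨i, ?_⟩
  have hseq : seqD e i γ = (cs γ).getD i 0 := by
    conv_lhs => rw [hcs2 γ]
    exact seqD_buildD e star hstar (cs γ) i
  rw [hseq, List.getD_eq_getElem?_getD, List.getElem?_eq_getElem hi]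
  simpa [hbi] using hγ'

lemma argsD_closed_of {γ' : D} (h : ∀ δ : D, (∃ c ∈ cs γ', δ ∈ c) → fv (p δ) = ∅) :
    ∀ g ∈ argsD p cs γ', fvList g = ∅ := by
  intro g hg
  rw [argsD, psL, List.mem_map] at hg
  obtain ⟨c, hc, rfl⟩ := hg
  rw [fvList_empty_iff]
  intro N hN
  rw [Multiset.mem_toList, Multiset.mem_map] at hN
  obtain ⟨δ, hδ, rfl⟩ := hN
  exact h δ ⟨c, hc, hδ⟩

lemma fvList_block (l : List D) (k : ℕ)
    (hargs : ∀ γ ∈ l, ∀ g ∈ argsD p cs γ, fvList g = ∅) :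
    fvList (l.map fun γ => hterm (Tm.var k) (argsD p cs γ)) =
      if l.isEmpty then ∅ else {k} := by
  induction l with
  | nil => simp
  | cons γ l ih =>
    rw [List.map_cons, fvList_cons, fv_hterm_eq,
      ih (fun γ' hγ' => hargs γ' (List.mem_cons_of_mem _ hγ'))]
    have h1 : {y | ∃ g ∈ argsD p cs γ, y ∈ fvList g} = (∅ : Set ℕ) := by
      ext y
      simp only [Set.mem_setOf_eq, Set.mem_empty_iff_false, iff_false, not_exists]
      rintro g ⟨hg, hy⟩
      rw [hargs γ (List.mem_cons_self) g hg] at hy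
      exact hy
    rw [fv_var, h1]
    by_cases hl : l.isEmpty <;> simp [hl]

lemma fv_wL : ∀ (bs : List (Multiset D)) (k : ℕ),
    (∀ b ∈ bs, ∀ γ ∈ b, ∀ g ∈ argsD p cs γ, fvList g = ∅) →
    fvList (wL p cs k bs) ⊆ Set.Ico k (k + bs.length) := by
  intro bs
  induction bs with
  | nil => intro k _; simp
  | cons b bt ih =>
    intro k hargs
    rw [wL_cons, fvList_append, fvList_block p cs b.toList k
      (fun γ hγ => hargs b (by simp) γ (by rwa [← Multiset.mem_toList]))]
    intro y hy
    rcases hy with hy | hy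
    · by_cases hb : b.toList.isEmpty
      · rw [if_pos hb] at hy; exact absurd hy (by simp)
      · rw [if_neg hb] at hy
        simp only [Set.mem_singleton_iff] at hy
        subst hy
        simp only [Set.mem_Ico, le_refl, true_and, List.length_cons]
        omega
    · have := ih (k + 1) (fun b' hb' => hargs b' (by simp [hb'])) hy
      simp only [Set.mem_Ico, List.length_cons] at this ⊢
      omega

end Model2
/-! ### Context step lemmas -/

lemma stepT_foldl {M : Tm} {𝕄 : Set Tm} (Ps : List (List Tm)) (h : StepT M 𝕄) :
    StepT (Ps.foldl Tm.app M) ((fun M' => Ps.foldl Tm.app M') '' 𝕄) := by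
  induction Ps generalizing M 𝕄 with
  | nil => simpa using h
  | cons P Ps ih =>
    have h1 : StepT (Tm.app M P) ((fun M' => Tm.app M' P) '' 𝕄) := by
      convert StepT.appL P h using 1
      ext A
      simp only [Set.mem_image, Set.mem_setOf_eq]
      constructor
      · rintro ⟨M', hM', rfl⟩; exact ⟨M', hM', rfl⟩
      · rintro ⟨M', hM', rfl⟩; exact ⟨M', hM', rfl⟩
    have h2 := ih h1
    rw [Set.image_image] at h2
    exact h2

lemma sstep_foldl {M : Tm} {𝕄 : Set Tm} (Ps : List (List Tm)) (h : StepT M 𝕄) :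
    SStepV {[Ps.foldl Tm.app M]} ((fun M' => [Ps.foldl Tm.app M']) '' 𝕄) := by
  have h1 := stepT_foldl Ps h
  have h2 : StepV [Ps.foldl Tm.app M]
      ((fun M' => [M']) '' ((fun M' => Ps.foldl Tm.app M') '' 𝕄)) := by
    convert StepV.elem [] h1 using 1
    ext Q
    simp only [Set.mem_image, Set.mem_setOf_eq]
    constructor
    · rintro ⟨M', hM', rfl⟩; exact ⟨M', hM', rfl⟩
    · rintro ⟨M', hM', rfl⟩; exact ⟨M', hM', rfl⟩
  rw [Set.image_image] at h2
  exact sstepV_single h2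

/-! ### Permutations of mapped lists -/

lemma perm_map_exists {D : Type*} (p : D → Tm) : ∀ {q r : List Tm}, q.Perm r →
    ∀ l : List D, r = l.map p → ∃ dl : List D, dl.Perm l ∧ q = dl.map p := by
  intro q r h
  induction h with
  | nil =>
    intro l hl
    cases l with
    | nil => exact ⟨[], by simp⟩
    | cons d l => simp at hl
  | cons x h ih =>
    intro l hl
    cases l with
    | nil => simp at hl
    | cons d l =>
      simp only [List.map_cons, List.cons.injEq] at hl
      obtain ⟨rfl, hl2⟩ := hl
      obtain ⟨dl, hperm, rfl⟩ := ih l hl2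
      exact ⟨d :: dl, hperm.cons d, by simp⟩
  | swap x y t =>
    intro l hl
    cases l with
    | nil => simp at hl
    | cons d1 l =>
      cases l with
      | nil => simp at hl
      | cons d2 l =>
        simp only [List.map_cons, List.cons.injEq] at hl
        obtain ⟨rfl, rfl, hl3⟩ := hl
        exact ⟨d2 :: d1 :: l, List.Perm.swap _ _ _, by simp [hl3]⟩
  | trans h1 h2 ih1 ih2 =>
    intro l hl
    obtain ⟨dl2, hperm2, rfl⟩ := ih2 l hl
    obtain ⟨dl1, hperm1, rfl⟩ := ih1 dl2 rfl
    exact ⟨dl1, hperm1.trans hperm2, rfl⟩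

lemma eq_of_zip_eq {D : Type*} : ∀ (gl dl : List D), gl.length = dl.length →
    (∀ pr ∈ List.zip gl dl, pr.1 = pr.2) → gl = dl := by
  intro gl
  induction gl with
  | nil => intro dl hlen _; cases dl; rfl; simp at hlen
  | cons γ gl ih =>
    intro dl hlen hall
    cases dl with
    | nil => simp at hlen
    | cons δ dl =>
      have h1 : γ = δ := hall (γ, δ) (by simp)
      have h2 := ih dl (by simpa using hlen) (fun pr hpr => hall pr (by simp [hpr]))
      rw [h1, h2]

section Closed

variable {D : Type*} (e : D ≃ Multiset D × D) (star : D)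
variable (p : D → Tm) (mt : D → Tm → List Tm) (cs : D → List (Multiset D))

lemma p_closed (hstar : e star = (0, star))
    (hwf : WellFounded (cmpR e))
    (hcs1 : ∀ γ : D, ∀ h : cs γ ≠ [], (cs γ).getLast h ≠ 0)
    (hcs2 : ∀ γ : D, γ = buildD e star (cs γ))
    (hp : ∀ as : List (Multiset D), (∀ h : as ≠ [], as.getLast h ≠ 0) →
      p (buildD e star as) = plusSpec mt as)
    (hmt : ∀ as : List (Multiset D), (∀ h : as ≠ [], as.getLast h ≠ 0) →
      ∀ M : Tm, mt (buildD e star as) M = minusSpec p as M) :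
    ∀ γ : D, fv (p γ) = ∅ := by
  have hwf' := hwf.transGen
  intro γ
  induction γ using hwf'.induction with
  | _ γ IH =>
  rw [p_eq e star p mt cs hcs1 hcs2 hp hmt γ, fv_lams, fv_taubar]
  have hargs : ∀ b ∈ cs γ, ∀ γ' ∈ b, ∀ g ∈ argsD p cs γ', fvList g = ∅ := by
    intro b hb γ' hγ'
    refine argsD_closed_of p cs (fun δ hδ => ?_)
    refine IH δ ?_
    exact Relation.TransGen.head (mem_stage_rel e star cs hstar hcs2 hδ)
      (Relation.TransGen.single (mem_stage_rel e star cs hstar hcs2 ⟨b, hb, hγ'⟩))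
  have hsub := fv_wL p cs (cs γ) 0 hargs
  ext y
  simp only [Set.mem_diff, Set.mem_setOf_eq, Set.mem_empty_iff_false, iff_false, not_and,
    not_not]
  intro hy
  have := hsub hy
  simp only [Set.mem_Ico, Nat.zero_add] at this
  rw [List.mem_range'_1]
  omega

end Closed
section RowReduce

variable {D : Type*} (e : D ≃ Multiset D × D) (star : D)
variable (p : D → Tm) (mt : D → Tm → List Tm) (cs : D → List (Multiset D))

/-- The dichotomy statement for a pair of points. -/
def dich (γ δ : D) : Prop :=
  (γ = δ → goodR {mt γ (p δ)}) ∧ (γ ≠ δ → badR {mt γ (p δ)})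

/-- The list of tests created by a stage of the evaluation. -/
noncomputable def rowL (gl dl : List D) : List Tm :=
  List.zipWith (fun γ δ => hterm (p δ) (argsD p cs γ)) gl dl

lemma argsD_closed (hclo : ∀ γ : D, fv (p γ) = ∅) (γ : D) :
    ∀ g ∈ argsD p cs γ, fvList g = ∅ :=
  argsD_closed_of p cs (fun δ _ => hclo δ)

lemma psL_mem_closed (hclo : ∀ γ : D, fv (p γ) = ∅) (a : Multiset D) :
    ∀ N ∈ (a.map p).toList, fv N = ∅ := by
  intro N hN
  rw [Multiset.mem_toList, Multiset.mem_map] at hN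
  obtain ⟨δ, _, rfl⟩ := hN
  exact hclo δ

lemma rowterm_closed (hclo : ∀ γ : D, fv (p γ) = ∅) (γ δ : D) :
    fv (hterm (p δ) (argsD p cs γ)) = ∅ := by
  rw [fv_hterm_eq, hclo δ]
  ext y
  simp only [Set.empty_union, Set.mem_setOf_eq, Set.mem_empty_iff_false, iff_false, not_exists]
  rintro g ⟨hg, hy⟩
  rw [argsD_closed p cs hclo γ g hg] at hy
  exact hy

lemma rowL_closed (hclo : ∀ γ : D, fv (p γ) = ∅) :
    ∀ (gl dl : List D), fvList (rowL p cs gl dl) = ∅ := by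
  intro gl
  induction gl with
  | nil => simp [rowL]
  | cons γ gl ih =>
    intro dl
    cases dl with
    | nil => simp [rowL]
    | cons δ dl =>
      rw [rowL, List.zipWith_cons_cons, fvList_cons, rowterm_closed p cs hclo γ δ]
      rw [show List.zipWith (fun γ δ => hterm (p δ) (argsD p cs γ)) gl dl = rowL p cs gl dl
        from rfl, ih dl]
      simp

lemma fv_wL_closed (hclo : ∀ γ : D, fv (p γ) = ∅) (bs : List (Multiset D)) (k : ℕ) :
    fvList (wL p cs k bs) ⊆ Set.Ico k (k + bs.length) :=
  fv_wL p cs bs k (fun _ _ γ _ => argsD_closed p cs hclo γ)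

lemma mem_fv_wL_head (hclo : ∀ γ : D, fv (p γ) = ∅) (b : Multiset D)
    (bt : List (Multiset D)) (k : ℕ) :
    k ∈ fvList (wL p cs k (b :: bt)) ↔ b ≠ 0 := by
  rw [wL_cons, fvList_append, fvList_block p cs b.toList k
      (fun γ _ => argsD_closed p cs hclo γ)]
  have h2 : k ∉ fvList (wL p cs (k + 1) bt) := by
    intro h
    have := fv_wL_closed p cs hclo bt (k + 1) h
    simp only [Set.mem_Ico] at this
    omega
  constructor
  · rintro (h | h)
    · by_cases hb : b.toList.isEmpty
      · rw [if_pos hb] at h; simp at h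
      · intro hb0
        rw [hb0] at hb
        simp [Multiset.toList_zero] at hb
    · exact absurd h h2
  · intro hb
    left
    have : ¬b.toList.isEmpty := by
      rw [List.isEmpty_iff, Multiset.toList_eq_nil]
      exact hb
    rw [if_neg this]
    rfl

lemma zip_self_eq {α : Type*} : ∀ (l : List α), ∀ pr ∈ List.zip l l, pr.1 = pr.2 := by
  intro l
  induction l with
  | nil => simp
  | cons x l ih =>
    intro pr hpr
    rcases List.mem_cons.mp hpr with rfl | h
    · rfl
    · exact ih pr h

lemma zipWith_replicate_map {α β γ' : Type*} (f : γ' → β → γ') (c : γ') (g : α → β) :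
    ∀ (l : List α),
      List.zipWith f (List.replicate l.length c) (l.map g) =
        l.map (fun x => f c (g x)) := by
  intro l
  induction l with
  | nil => simp
  | cons x l ih => simp [List.replicate_succ, ih]

lemma row_reduce
    (hcs1 : ∀ γ : D, ∀ h : cs γ ≠ [], (cs γ).getLast h ≠ 0)
    (hcs2 : ∀ γ : D, γ = buildD e star (cs γ))
    (hmt : ∀ as : List (Multiset D), (∀ h : as ≠ [], as.getLast h ≠ 0) →
      ∀ M : Tm, mt (buildD e star as) M = minusSpec p as M) :
    ∀ (gl dl : List D), (∀ pr ∈ List.zip gl dl, dich p mt pr.1 pr.2) →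
    ((∀ pr ∈ List.zip gl dl, pr.1 = pr.2) → goodR {rowL p cs gl dl}) ∧
    ((∃ pr ∈ List.zip gl dl, pr.1 ≠ pr.2) → badR {rowL p cs gl dl}) := by
  intro gl
  induction gl with
  | nil =>
    intro dl _
    constructor
    · intro _; exact ReflTransGen.refl
    · rintro ⟨pr, hpr, _⟩; simp at hpr
  | cons γ gl ih =>
    intro dl hdich
    cases dl with
    | nil =>
      constructor
      · intro _; exact ReflTransGen.refl
      · rintro ⟨pr, hpr, _⟩; simp at hpr
    | cons δ dl =>
      have hrow : rowL p cs (γ :: gl) (δ :: dl) =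
          [hterm (p δ) (argsD p cs γ)] ++ rowL p cs gl dl := by
        rw [rowL, List.zipWith_cons_cons]
        rfl
      have hpair := hdich (γ, δ) (by simp)
      have hmteq : {mt γ (p δ)} = ({[hterm (p δ) (argsD p cs γ)]} : Set (List Tm)) := by
        rw [mt_eq e star p mt cs hcs1 hcs2 hmt γ (p δ)]
      have htail := ih dl (fun pr hpr => hdich pr (by simp [hpr]))
      constructor
      · intro hall
        have hγδ : γ = δ := hall (γ, δ) (by simp)
        have hgood : goodR {[hterm (p δ) (argsD p cs γ)]} := by
          rw [← hmteq]; exact hpair.1 hγδ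
        rw [hrow]
        exact (rv_prefix_good _ hgood).trans
          (htail.1 (fun pr hpr => hall pr (by simp [hpr])))
      · intro hex
        by_cases hγδ : γ = δ
        · have hgood : goodR {[hterm (p δ) (argsD p cs γ)]} := by
            rw [← hmteq]; exact hpair.1 hγδ
          rw [hrow]
          refine (rv_prefix_good _ hgood).trans (htail.2 ?_)
          obtain ⟨pr, hpr, hne⟩ := hex
          rcases List.mem_cons.mp hpr with rfl | h
          · exact absurd hγδ hne
          · exact ⟨pr, h, hne⟩
        · have hbad : badR {[hterm (p δ) (argsD p cs γ)]} := by
            rw [← hmteq]; exact hpair.2 hγδ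
          rw [hrow]
          exact rv_prefix_bad _ hbad

lemma norm_tail {a : Multiset D} {at' : List (Multiset D)}
    (h : ∀ hh : (a :: at') ≠ [], (a :: at').getLast hh ≠ 0) :
    ∀ hh : at' ≠ [], at'.getLast hh ≠ 0 := by
  intro hh
  have := h (by simp)
  rwa [List.getLast_cons hh] at this

lemma norm_head_zero {a : Multiset D} {at' : List (Multiset D)}
    (h : ∀ hh : (a :: at') ≠ [], (a :: at').getLast hh ≠ 0) (ha : a = 0) : at' ≠ [] := by
  intro hnil
  subst hnil
  exact h (by simp) (by simpa using ha)

end RowReduce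
section MainLemma

variable {D : Type*} (e : D ≃ Multiset D × D) (star : D)
variable (p : D → Tm) (mt : D → Tm → List Tm) (cs : D → List (Multiset D))

theorem mainLemma
    (hstar : e star = (0, star))
    (hcs1 : ∀ γ : D, ∀ h : cs γ ≠ [], (cs γ).getLast h ≠ 0)
    (hcs2 : ∀ γ : D, γ = buildD e star (cs γ))
    (hmt : ∀ as : List (Multiset D), (∀ h : as ≠ [], as.getLast h ≠ 0) →
      ∀ M : Tm, mt (buildD e star as) M = minusSpec p as M)
    (hclo : ∀ γ : D, fv (p γ) = ∅) :
    ∀ (n : ℕ) (as bs : List (Multiset D)) (k : ℕ) (T : List Tm),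
      as.length + bs.length ≤ n →
      (∀ h : as ≠ [], as.getLast h ≠ 0) →
      (∀ h : bs ≠ [], bs.getLast h ≠ 0) →
      fvList T = ∅ →
      (goodR {T} ∨ badR {T}) →
      (∀ γ δ : D, (∃ b ∈ bs, γ ∈ b) → (∃ a ∈ as, δ ∈ a) → dich p mt γ δ) →
      ((as = bs → goodR {T} → goodR {[Cterm p cs k T as bs]}) ∧
       (badR {T} → badR {[Cterm p cs k T as bs]}) ∧
       (as ≠ bs → badR {[Cterm p cs k T as bs]})) := by
  intro n
  induction n using Nat.strong_induction_on with
  | _ n IH =>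
  intro as bs k T hn hnas hnbs hTclo hT hdich
  match as, bs with
  | [], [] =>
    have hC : Cterm p cs k T [] [] = Tm.taubar (T ++ []) := rfl
    have hstep : SStepV {[Cterm p cs k T [] []]} {T} := by
      rw [hC]
      have h := sstepV_single (StepV.gamma (T ++ []) [])
      simpa using h
    exact ⟨fun _ hg => ReflTransGen.head hstep hg,
      fun hb => ReflTransGen.head hstep hb,
      fun hne => absurd rfl hne⟩
  | [], b :: bt =>
    have hC : Cterm p cs k T [] (b :: bt) =
        Tm.lam k (lams (List.range' (k+1) bt.length)
          (Tm.taubar (T ++ wL p cs k (b :: bt)))) := by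
      rw [Cterm, show (b :: bt).length = bt.length + 1 from rfl, List.range'_succ]
      rfl
    have hfv : k ∈ fv (lams (List.range' (k+1) bt.length)
        (Tm.taubar (T ++ wL p cs k (b :: bt)))) ↔ b ≠ 0 := by
      rw [fv_lams, fv_taubar, fvList_append, hTclo]
      have hk : k ∉ List.range' (k+1) bt.length := by
        rw [List.mem_range'_1]; omega
      have := mem_fv_wL_head p cs hclo b bt k
      simp only [Set.mem_diff, Set.mem_union, Set.mem_empty_iff_false, false_or,
        Set.mem_setOf_eq]
      tauto
    by_cases hb : b = 0
    · -- head multiset empty: strip the abstraction and recurse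
      have hbt_ne : bt ≠ [] := norm_head_zero hnbs hb
      have hM₁C : lams (List.range' (k+1) bt.length) (Tm.taubar (T ++ wL p cs k (b :: bt)))
          = Cterm p cs (k+1) T [] bt := by
        rw [Cterm, wL_cons, hb]
        simp only [Multiset.toList_zero, List.map_nil, List.nil_append]
        rfl
      have hzs : zeroSub₁ k (lams (List.range' (k+1) bt.length)
          (Tm.taubar (T ++ wL p cs k (b :: bt)))) =
          {lams (List.range' (k+1) bt.length) (Tm.taubar (T ++ wL p cs k (b :: bt)))} := by
        rw [zeroSub₁]
        ext A
        simp only [Set.mem_setOf_eq, Set.mem_singleton_iff]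
        have : k ∉ fv (lams (List.range' (k+1) bt.length)
            (Tm.taubar (T ++ wL p cs k (b :: bt)))) := fun hk => (hfv.mp hk) hb
        tauto
      have hstep : SStepV {[Cterm p cs k T [] (b :: bt)]} {[Cterm p cs (k+1) T [] bt]} := by
        rw [hC]
        have h := sstepV_single (StepV.tau k (lams (List.range' (k+1) bt.length)
          (Tm.taubar (T ++ wL p cs k (b :: bt)))) [])
        rw [hzs] at h
        convert h using 1
        ext Q
        simp [hM₁C, eq_comm]
      have hlt : ([] : List (Multiset D)).length + bt.length < n := by
        simp only [List.length_nil, List.length_cons] at hn ⊢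
        omega
      have hrec := IH _ hlt [] bt (k+1) T le_rfl (by simp) (norm_tail hnbs) hTclo hT
        (fun γ δ hg ha => hdich γ δ
          (by obtain ⟨b', hb', hγ⟩ := hg; exact ⟨b', List.mem_cons_of_mem _ hb', hγ⟩) ha)
      refine ⟨fun heq => absurd heq (by simp), ?_, ?_⟩
      · intro hbad
        exact ReflTransGen.head hstep (hrec.2.1 hbad)
      · intro _
        exact ReflTransGen.head hstep (hrec.2.2 (by simp [Ne, eq_comm]; exact hbt_ne))
    · -- head multiset non-empty: the τ-rule produces the empty sum
      have hzs : zeroSub₁ k (lams (List.range' (k+1) bt.length)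
          (Tm.taubar (T ++ wL p cs k (b :: bt)))) = ∅ := by
        rw [zeroSub₁]
        ext A
        simp only [Set.mem_setOf_eq, Set.mem_empty_iff_false, iff_false, not_and]
        intro _
        exact fun hk => hk (hfv.mpr hb)
      have hstep : SStepV {[Cterm p cs k T [] (b :: bt)]} ∅ := by
        rw [hC]
        have h := sstepV_single (StepV.tau k (lams (List.range' (k+1) bt.length)
          (Tm.taubar (T ++ wL p cs k (b :: bt)))) [])
        rw [hzs] at h
        convert h using 1
        ext Q; simp
      exact ⟨fun heq => absurd heq (by simp),
        fun _ => ReflTransGen.single hstep, fun _ => ReflTransGen.single hstep⟩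
  | a :: at', [] =>
    have hC : Cterm p cs k T (a :: at') [] =
        (psL p at').foldl Tm.app (Tm.app (Tm.taubar (T ++ []))
          ((a.map p).toList)) := rfl
    by_cases ha : a = 0
    · have hat_ne : at' ≠ [] := norm_head_zero hnas ha
      have hPa : (a.map p).toList = [] := by rw [ha]; simp
      have hstep : SStepV {[Cterm p cs k T (a :: at') []]} {[Cterm p cs k T at' []]} := by
        rw [hC, hPa]
        have h := sstep_foldl (psL p at') (StepT.taubarNil (T ++ []))
        rwa [Set.image_singleton] at h
      have hlt : at'.length + ([] : List (Multiset D)).length < n := by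
        simp only [List.length_nil, List.length_cons] at hn ⊢
        omega
      have hrec := IH _ hlt at' [] k T le_rfl (norm_tail hnas) (by simp) hTclo hT
        (fun γ δ hg ha' => hdich γ δ hg
          (by obtain ⟨a', ha'', hδ⟩ := ha'; exact ⟨a', List.mem_cons_of_mem _ ha'', hδ⟩))
      refine ⟨fun heq => absurd heq (by simp), ?_, ?_⟩
      · intro hbad
        exact ReflTransGen.head hstep (hrec.2.1 hbad)
      · intro _
        exact ReflTransGen.head hstep (hrec.2.2 (by simp [hat_ne]))
    · have hPa : (a.map p).toList ≠ [] := by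
        rw [Ne, Multiset.toList_eq_nil, Multiset.map_eq_zero]
        exact ha
      have hstep : SStepV {[Cterm p cs k T (a :: at') []]} ∅ := by
        rw [hC]
        have h := sstep_foldl (psL p at') (StepT.taubarCons (T ++ []) hPa)
        rwa [Set.image_empty] at h
      exact ⟨fun heq => absurd heq (by simp),
        fun _ => ReflTransGen.single hstep, fun _ => ReflTransGen.single hstep⟩
  | a :: at', b :: bt =>
    have hblock : wL p cs k (b :: bt) =
        List.zipWith hterm
          (List.replicate (b.toList.map (argsD p cs)).length (Tm.var k))
          (b.toList.map (argsD p cs)) ++ wL p cs (k+1) bt := by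
      rw [wL_cons, List.length_map,
        zipWith_replicate_map hterm (Tm.var k) (argsD p cs) b.toList]
    have hC : Cterm p cs k T (a :: at') (b :: bt) =
        (psL p at').foldl Tm.app (Tm.app (Tm.lam k
          (repB (List.range' (k+1) bt.length) T (wL p cs (k+1) bt)
            (b.toList.map (argsD p cs))
            (List.replicate (b.toList.map (argsD p cs)).length (Tm.var k))))
          ((a.map p).toList)) := by
      rw [Cterm, repB, ← hblock, show (b :: bt).length = bt.length + 1 from rfl,
        List.range'_succ]
      rfl
    have hysx : k ∉ List.range' (k+1) bt.length := by
      rw [List.mem_range'_1]; omega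
    have hTx : k ∉ fvList T := by rw [hTclo]; exact Set.notMem_empty k
    have hrestx : k ∉ fvList (wL p cs (k+1) bt) := by
      intro h
      have := fv_wL_closed p cs hclo bt (k+1) h
      simp only [Set.mem_Ico] at this
      omega
    have hgssx : ∀ gs ∈ b.toList.map (argsD p cs), ∀ g ∈ gs, k ∉ fvList g := by
      intro gs hgs g hg
      rw [List.mem_map] at hgs
      obtain ⟨γ, _, rfl⟩ := hgs
      rw [argsD_closed p cs hclo γ g hg]
      exact Set.notMem_empty k
    have hPax : ∀ N ∈ (a.map p).toList, k ∉ fv N := by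
      intro N hN
      rw [psL_mem_closed p hclo a N hN]
      exact Set.notMem_empty k
    have hchar := beta_char k hysx hTx hrestx hgssx ((a.map p).toList) hPax
    have hstep : SStepV {[Cterm p cs k T (a :: at') (b :: bt)]}
        ((fun q => [(psL p at').foldl Tm.app
          (repB (List.range' (k+1) bt.length) T (wL p cs (k+1) bt)
            (b.toList.map (argsD p cs)) q)]) ''
          {q | q.Perm ((a.map p).toList) ∧
            q.length = (b.toList.map (argsD p cs)).length}) := by
      rw [hC]
      have h := sstep_foldl (psL p at')
        (StepT.beta k (repB (List.range' (k+1) bt.length) T (wL p cs (k+1) bt)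
          (b.toList.map (argsD p cs))
          (List.replicate (b.toList.map (argsD p cs)).length (Tm.var k)))
          ((a.map p).toList))
      rw [hchar, Set.image_image] at h
      exact h
    by_cases hcard : ((a.map p).toList).length = (b.toList.map (argsD p cs)).length
    · -- matching cardinalities
      have hdecomp : ∀ q : List Tm, q.Perm ((a.map p).toList) →
          ∃ dl : List D, (↑dl : Multiset D) = a ∧ q = dl.map p ∧
            dl.length = b.toList.length := by
        intro q hq
        have h1 : ((a.map p).toList).Perm (a.toList.map p) := by
          rw [← Multiset.coe_eq_coe, Multiset.coe_toList, ← Multiset.map_coe,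
            Multiset.coe_toList]
        obtain ⟨dl, hdl, hq2⟩ := perm_map_exists p (hq.trans h1) a.toList rfl
        have hcoe : (↑dl : Multiset D) = a :=
          (Multiset.coe_eq_coe.mpr hdl).trans (Multiset.coe_toList a)
        refine ⟨dl, hcoe, hq2, ?_⟩
        have h2 : dl.length = q.length := by rw [hq2, List.length_map]
        rw [h2, hq.length_eq, hcard, List.length_map]
      have hFq : ∀ dl : List D, dl.length = b.toList.length →
          [(psL p at').foldl Tm.app
            (repB (List.range' (k+1) bt.length) T (wL p cs (k+1) bt)
              (b.toList.map (argsD p cs)) (dl.map p))] =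
          [Cterm p cs (k+1) (T ++ rowL p cs b.toList dl) at' bt] := by
        intro dl _
        have hzipeq : List.zipWith (fun x y => hterm (p x) (argsD p cs y)) dl b.toList =
            rowL p cs b.toList dl := by
          rw [rowL, List.zipWith_comm]
        simp only [Cterm, repB]
        rw [List.zipWith_map (f := hterm) (g := p) (h := argsD p cs) (l₁ := dl) (l₂ := b.toList), hzipeq,
          List.append_assoc]
      have hpairs : ∀ dl : List D, (↑dl : Multiset D) = a →
          ∀ pr ∈ List.zip b.toList dl, dich p mt pr.1 pr.2 := by
        intro dl hcoe pr hpr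
        obtain ⟨h1, h2⟩ := List.of_mem_zip hpr
        exact hdich pr.1 pr.2 ⟨b, by simp, by rwa [← Multiset.mem_toList]⟩
          ⟨a, by simp, by rw [← hcoe]; exact Multiset.mem_coe.mpr h2⟩
      have hT'clo : ∀ dl : List D, fvList (T ++ rowL p cs b.toList dl) = ∅ := by
        intro dl
        rw [fvList_append, hTclo, rowL_closed p cs hclo]
        simp
      have hrec : ∀ T' : List Tm, fvList T' = ∅ → (goodR {T'} ∨ badR {T'}) →
          (at' = bt → goodR {T'} → goodR {[Cterm p cs (k+1) T' at' bt]}) ∧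
          (badR {T'} → badR {[Cterm p cs (k+1) T' at' bt]}) ∧
          (at' ≠ bt → badR {[Cterm p cs (k+1) T' at' bt]}) := by
        intro T' hT'c hT'gb
        refine IH (at'.length + bt.length)
          (by simp only [List.length_cons] at hn; omega)
          at' bt (k+1) T' le_rfl (norm_tail hnas) (norm_tail hnbs) hT'c hT'gb ?_
        intro γ δ hg ha'
        refine hdich γ δ ?_ ?_
        · obtain ⟨b', hb', hγ⟩ := hg; exact ⟨b', List.mem_cons_of_mem _ hb', hγ⟩
        · obtain ⟨a', ha'', hδ⟩ := ha'; exact ⟨a', List.mem_cons_of_mem _ ha'', hδ⟩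
      have hSlist : ((fun q => [(psL p at').foldl Tm.app
          (repB (List.range' (k+1) bt.length) T (wL p cs (k+1) bt)
            (b.toList.map (argsD p cs)) q)]) ''
          {q | q.Perm ((a.map p).toList) ∧
            q.length = (b.toList.map (argsD p cs)).length}) =
          {A | ∃ q ∈ ((a.map p).toList).permutations,
            A = [(psL p at').foldl Tm.app
              (repB (List.range' (k+1) bt.length) T (wL p cs (k+1) bt)
                (b.toList.map (argsD p cs)) q)]} := by
        ext A
        simp only [Set.mem_image, Set.mem_setOf_eq, List.mem_permutations]
        constructor
        · rintro ⟨q, ⟨h1, _⟩, rfl⟩; exact ⟨q, h1, rfl⟩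
        · rintro ⟨q, h1, rfl⟩; exact ⟨q, ⟨h1, by rw [h1.length_eq, hcard]⟩, rfl⟩
      refine ⟨?_, ?_, ?_⟩
      · -- equal case
        intro heq hgoodT
        injection heq with hab htails
        refine ReflTransGen.head hstep ?_
        rw [hSlist]
        apply rv_list_good
        · intro q hq
          obtain ⟨dl, hcoe, rfl, hlen⟩ := hdecomp q (List.mem_permutations.mp hq)
          rw [hFq dl hlen]
          have hrr := row_reduce e star p mt cs hcs1 hcs2 hmt b.toList dl
            (hpairs dl hcoe)
          by_cases hall : ∀ pr ∈ List.zip b.toList dl, pr.1 = pr.2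
          · left
            have hT'good : goodR {T ++ rowL p cs b.toList dl} :=
              goodR_append hgoodT (hrr.1 hall)
            exact (hrec _ (hT'clo dl) (Or.inl hT'good)).1 htails hT'good
          · right
            push_neg at hall
            have hT'bad : badR {T ++ rowL p cs b.toList dl} :=
              badR_append_of_right hgoodT (hrr.2 (by
                obtain ⟨pr, h1, h2⟩ := hall; exact ⟨pr, h1, h2⟩))
            exact (hrec _ (hT'clo dl) (Or.inr hT'bad)).2.1 hT'bad
        · refine ⟨b.toList.map p, ?_, ?_⟩
          · rw [List.mem_permutations, ← Multiset.coe_eq_coe, Multiset.coe_toList,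
              ← Multiset.map_coe, Multiset.coe_toList, hab]
          · rw [hFq b.toList rfl]
            have hcoeb : (↑(b.toList) : Multiset D) = a := by
              rw [Multiset.coe_toList, hab]
            have hrr := row_reduce e star p mt cs hcs1 hcs2 hmt b.toList b.toList
              (hpairs b.toList hcoeb)
            have hT'good : goodR {T ++ rowL p cs b.toList b.toList} :=
              goodR_append hgoodT (hrr.1 (zip_self_eq b.toList))
            exact (hrec _ (hT'clo b.toList) (Or.inl hT'good)).1 htails hT'good
      · -- bad test sum
        intro hbadT
        refine ReflTransGen.head hstep ?_
        rw [hSlist]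
        apply rv_list_bad
        intro q hq
        obtain ⟨dl, hcoe, rfl, hlen⟩ := hdecomp q (List.mem_permutations.mp hq)
        rw [hFq dl hlen]
        have hT'bad : badR {T ++ rowL p cs b.toList dl} :=
          badR_append_of_left _ hbadT
        exact (hrec _ (hT'clo dl) (Or.inr hT'bad)).2.1 hT'bad
      · -- different points
        intro hne
        refine ReflTransGen.head hstep ?_
        rw [hSlist]
        apply rv_list_bad
        intro q hq
        obtain ⟨dl, hcoe, rfl, hlen⟩ := hdecomp q (List.mem_permutations.mp hq)
        rw [hFq dl hlen]
        have hrr := row_reduce e star p mt cs hcs1 hcs2 hmt b.toList dl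
          (hpairs dl hcoe)
        by_cases hab : a = b
        · have htne : at' ≠ bt := fun h => hne (by rw [hab, h])
          rcases hT with hTg | hTb
          · by_cases hall : ∀ pr ∈ List.zip b.toList dl, pr.1 = pr.2
            · have hT'good : goodR {T ++ rowL p cs b.toList dl} :=
                goodR_append hTg (hrr.1 hall)
              exact (hrec _ (hT'clo dl) (Or.inl hT'good)).2.2 htne
            · push_neg at hall
              have hT'bad : badR {T ++ rowL p cs b.toList dl} :=
                badR_append_of_right hTg (hrr.2 (by
                  obtain ⟨pr, h1, h2⟩ := hall; exact ⟨pr, h1, h2⟩))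
              exact (hrec _ (hT'clo dl) (Or.inr hT'bad)).2.2 htne
          · have hT'bad : badR {T ++ rowL p cs b.toList dl} :=
              badR_append_of_left _ hTb
            exact (hrec _ (hT'clo dl) (Or.inr hT'bad)).2.2 htne
        · have hex : ∃ pr ∈ List.zip b.toList dl, pr.1 ≠ pr.2 := by
            by_contra hc
            push_neg at hc
            have heql : b.toList = dl := eq_of_zip_eq b.toList dl hlen.symm hc
            apply hab
            rw [← hcoe, ← heql, Multiset.coe_toList]
          have hT'bad : badR {T ++ rowL p cs b.toList dl} := by
            rcases hT with hTg | hTb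
            · exact badR_append_of_right hTg (hrr.2 hex)
            · exact badR_append_of_left _ hTb
          exact (hrec _ (hT'clo dl) (Or.inr hT'bad)).2.1 hT'bad
    · -- cardinality mismatch: everything dies
      have hempty : {q | q.Perm ((a.map p).toList) ∧
          q.length = (b.toList.map (argsD p cs)).length} = (∅ : Set (List Tm)) := by
        ext q
        simp only [Set.mem_setOf_eq, Set.mem_empty_iff_false, iff_false, not_and]
        intro hperm
        rw [hperm.length_eq]
        exact fun h => hcard h
      rw [hempty, Set.image_empty] at hstep
      refine ⟨?_, fun _ => ReflTransGen.single hstep, fun _ => ReflTransGen.single hstep⟩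
      intro heq _
      exfalso
      apply hcard
      injection heq with hab htails
      rw [Multiset.length_toList, Multiset.card_map, List.length_map,
        Multiset.length_toList, hab]

end MainLemma
/-- For `α, β` in the relational model `D`, the closed test `α⁻[β⁺]` reduces to the
success `ε` (the empty test) when `α = β`, and to `0` (the empty sum) otherwise.
Here `p α = α⁺` and `mt α M = α⁻[M]` are the maps defined by mutual recursion on rank
(well-founded by `hwf`), characterized by `hp`, `hmt`. -/
theorem test_of_point_separates (e : D ≃ Multiset D × D) (star : D)
    (hstar : e star = (0, star))
    (hwf : WellFounded (fun β α : D => ∃ i : ℕ, β ∈ seqD e i α))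
    (hqf : ∀ α : D, ∃ as : List (Multiset D),
      (∀ h : as ≠ [], as.getLast h ≠ 0) ∧ α = buildD e star as)
    (p : D → Tm) (mt : D → Tm → List Tm)
    (hp : ∀ as : List (Multiset D), (∀ h : as ≠ [], as.getLast h ≠ 0) →
      p (buildD e star as) = plusSpec mt as)
    (hmt : ∀ as : List (Multiset D), (∀ h : as ≠ [], as.getLast h ≠ 0) →
      ∀ M : Tm, mt (buildD e star as) M = minusSpec p as M) :
    ∀ α β : D,
      (α = β → Relation.ReflTransGen SStepV {mt α (p β)} {([] : List Tm)}) ∧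
      (α ≠ β → Relation.ReflTransGen SStepV {mt α (p β)} (∅ : Set (List Tm))) := by
  classical
  choose cs hcs using hqf
  have hcs1 : ∀ γ : D, ∀ h : cs γ ≠ [], (cs γ).getLast h ≠ 0 := fun γ => (hcs γ).1
  have hcs2 : ∀ γ : D, γ = buildD e star (cs γ) := fun γ => (hcs γ).2
  have hclo : ∀ γ : D, fv (p γ) = ∅ :=
    p_closed e star p mt cs hstar hwf hcs1 hcs2 hp hmt
  have helper : ∀ α β : D,
      (∀ γ δ : D, (∃ b ∈ cs β, γ ∈ b) → (∃ a ∈ cs α, δ ∈ a) → dich p mt γ δ) →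
      dich p mt α β := by
    intro α β hpairs
    have hCt : mt α (p β) = [Cterm p cs 0 [] (cs α) (cs β)] := by
      rw [mt_eq e star p mt cs hcs1 hcs2 hmt α (p β),
        p_eq e star p mt cs hcs1 hcs2 hp hmt β]
      simp only [Cterm, hterm, argsD, List.nil_append]
    have hm := mainLemma e star p mt cs hstar hcs1 hcs2 hmt hclo
      ((cs α).length + (cs β).length) (cs α) (cs β) 0 [] le_rfl (hcs1 α) (hcs1 β)
      (by simp) (Or.inl Relation.ReflTransGen.refl) hpairs
    refine ⟨?_, ?_⟩
    · intro h
      rw [show ({mt α (p β)} : Set (List Tm)) = {[Cterm p cs 0 [] (cs α) (cs β)]} by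
        rw [hCt]]
      exact hm.1 (by rw [h]) Relation.ReflTransGen.refl
    · intro h
      rw [show ({mt α (p β)} : Set (List Tm)) = {[Cterm p cs 0 [] (cs α) (cs β)]} by
        rw [hCt]]
      exact hm.2.2 (fun hcseq => h (by rw [hcs2 α, hcs2 β, hcseq]))
  have key : ∀ α β : D, dich p mt α β ∧ dich p mt β α := by
    intro α
    refine hwf.induction
      (C := fun α => ∀ β : D, dich p mt α β ∧ dich p mt β α) α ?_
    intro x IH β
    constructor
    · exact helper x β (fun γ δ hγ hδ =>
        ((IH δ (mem_stage_rel e star cs hstar hcs2 hδ)) γ).2)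
    · exact helper β x (fun γ δ hγ hδ =>
        ((IH γ (mem_stage_rel e star cs hstar hcs2 hγ)) δ).1)
  intro α β
  exact ⟨(key α β).1.1, (key α β).1.2⟩
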